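/- arXiv:1802.07963 — 8 statements merged into one kernel-verified Lean document; each statement's English description precedes it below -/
import Mathlib

section
/- For each fixed μ > 0, the sequence ε_n(μ) = nπ - κ_n(μ) tends to 0 as n → ∞. -/
open Real Filter

theorem eps_tendsto_zero_in_n (μ : ℝ) (hμ : 0 < μ) (κ : ℕ → ℝ)
    (hκ : ∀ n : ℕ, 1 ≤ n →
      κ n ∈ Set.Ioo ((2 * (n : ℝ) - 1) * π / 2) ((2 * (n : ℝ) + 1) * π / 2) ∧
      κ n * Real.tan (κ n) + μ = 0) :
    Tendsto (fun n : ℕ => (n : ℝ) * π - κ n) atTop (nhds 0) := by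
  have hπ := Real.pi_pos
  have hκpos : ∀ n : ℕ, 1 ≤ n → 0 < κ n := by
    intro n hn
    have h := (hκ n hn).1.1
    have h1 : (1:ℝ) ≤ (n:ℝ) := by exact_mod_cast hn
    nlinarith
  have hκ_tendsto : Tendsto κ atTop atTop := by
    refine tendsto_atTop_mono' atTop
      (f₁ := fun n : ℕ => (2 * (n : ℝ) - 1) * π / 2) ?_ ?_
    · filter_upwards [eventually_ge_atTop 1] with n hn
      exact le_of_lt (hκ n hn).1.1
    · have h2 : Tendsto (fun n : ℕ => 2 * (n : ℝ) - 1) atTop atTop := by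
        apply tendsto_atTop_add_const_right
        exact Tendsto.const_mul_atTop (by norm_num : (0:ℝ) < 2)
          tendsto_natCast_atTop_atTop
      exact (h2.atTop_mul_const (by positivity : (0:ℝ) < π / 2)).congr
        (fun n => by ring)
  have hdiv : Tendsto (fun n => μ / κ n) atTop (nhds 0) :=
    Tendsto.div_atTop tendsto_const_nhds hκ_tendsto
  have harctan : Tendsto (fun n => Real.arctan (μ / κ n)) atTop (nhds 0) := by
    have := (Real.continuous_arctan.tendsto 0).comp hdiv
    simpa [Function.comp_def] using this
  apply Tendsto.congr' _ harctan
  filter_upwards [eventually_ge_atTop 1] with n hn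
  have hmem := (hκ n hn).1
  have heq := (hκ n hn).2
  have hub : (2 * (n:ℝ) + 1) * π / 2 = (n:ℝ) * π + π / 2 := by ring
  have hlb : (2 * (n:ℝ) - 1) * π / 2 = (n:ℝ) * π - π / 2 := by ring
  have hε1 : -(π/2) < (n:ℝ) * π - κ n := by
    have := hmem.2; rw [hub] at this; linarith
  have hε2 : (n:ℝ) * π - κ n < π/2 := by
    have := hmem.1; rw [hlb] at this; linarith
  have hκn := hκpos n hn
  have key : ∀ x : ℝ, Real.tan (-x + n * π) = - Real.tan x := by
    intro x
    rw [(Real.tan_periodic.nat_mul n) (-x), Real.tan_neg]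
  have htan : Real.tan (κ n) = - Real.tan ((n:ℝ) * π - κ n) := by
    have := key ((n:ℝ) * π - κ n)
    rw [show -((n:ℝ) * π - κ n) + n * π = κ n by push_cast; ring] at this
    exact this
  have htanε : Real.tan ((n:ℝ) * π - κ n) = μ / κ n := by
    have : Real.tan (κ n) = -μ / κ n := by
      field_simp
      linarith
    rw [this] at htan
    field_simp at htan ⊢
    linarith
  rw [← htanε, Real.arctan_tan hε1 hε2]
end

section
/- For each fixed positive integer n, ε_n(μ) = nπ - κ_n(μ) tends to 0 as μ → 0⁺. -/
open Real Filter

theorem eps_tendsto_zero_mu_to_zero (n : ℕ) (hn : 1 ≤ n) (κ : ℝ → ℝ)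
    (hκ : ∀ μ : ℝ, 0 < μ →
      κ μ ∈ Set.Ioo ((2 * (n : ℝ) - 1) * π / 2) ((2 * (n : ℝ) + 1) * π / 2) ∧
      κ μ * Real.tan (κ μ) + μ = 0) :
    Tendsto (fun μ : ℝ => (n : ℝ) * π - κ μ) (nhdsWithin 0 (Set.Ioi 0)) (nhds 0) := by
  have hpi := Real.pi_gt_three
  have key : ∀ μ : ℝ, 0 < μ → 0 < (n : ℝ) * π - κ μ ∧ (n : ℝ) * π - κ μ < μ := by
    intro μ hμ
    obtain ⟨⟨hlo, hhi⟩, heq⟩ := hκ μ hμ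
    have hn1 : (1 : ℝ) ≤ (n : ℝ) := by exact_mod_cast hn
    have hc1 : (1 : ℝ) < κ μ := by nlinarith
    set c := κ μ with hc
    set ε := (n : ℝ) * π - c with hε
    have htan : Real.tan c = -Real.tan ε := by
      have := (Real.tan_periodic.nat_mul n).sub_eq c
      rw [show c - n * π = -ε by ring] at this
      rw [← this, Real.tan_neg]
    have hεlt : ε < π / 2 := by simp only [hε]; nlinarith
    have hεpos : 0 < ε := by
      by_contra h
      push_neg at h
      have h1 : 0 ≤ Real.tan (-ε) := by
        apply Real.tan_nonneg_of_nonneg_of_le_pi_div_two (by linarith)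
        simp only [hε]; nlinarith
      rw [Real.tan_neg] at h1
      have : Real.tan c ≥ 0 := by rw [htan]; linarith
      nlinarith
    have htε : c * Real.tan ε = μ := by
      rw [htan] at heq; nlinarith
    have hlt : ε < Real.tan ε := Real.lt_tan hεpos hεlt
    have htpos : 0 < Real.tan ε := lt_trans hεpos hlt
    constructor
    · exact hεpos
    · nlinarith
  have h1 : Tendsto (fun μ : ℝ => μ) (nhdsWithin 0 (Set.Ioi 0)) (nhds 0) :=
    tendsto_id.mono_left nhdsWithin_le_nhds
  refine tendsto_of_tendsto_of_tendsto_of_le_of_le' tendsto_const_nhds h1 ?_ ?_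
  · filter_upwards [self_mem_nhdsWithin] with μ hμ
    exact (key μ hμ).1.le
  · filter_upwards [self_mem_nhdsWithin] with μ hμ
    exact (key μ hμ).2.le
end

section
/- For each fixed positive integer n, ε_n(μ) = nπ - κ_n(μ) tends to π/2 as μ → ∞ (equivalently, κ_n(μ) → (2n-1)π/2). -/
open Real Filter

theorem kappa_tendsto_aux (n : ℕ) (hn : 1 ≤ n) (κ : ℝ → ℝ)
    (hκ : ∀ μ : ℝ, 0 < μ →
      κ μ ∈ Set.Ioo ((2 * (n : ℝ) - 1) * π / 2) ((2 * (n : ℝ) + 1) * π / 2) ∧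
      κ μ * Real.tan (κ μ) + μ = 0) :
    Tendsto κ atTop (nhds ((2 * (n : ℝ) - 1) * π / 2)) := by
  have hπ := Real.pi_pos
  have hn1 : (1:ℝ) ≤ (n:ℝ) := by exact_mod_cast hn
  rw [Metric.tendsto_atTop]
  intro ε hε
  set ε' := min ε (π/4) with hε'def
  have hε'0 : 0 < ε' := lt_min hε (by positivity)
  have hε'le : ε' ≤ ε := min_le_left _ _
  have hε'lt : ε' < π/2 := lt_of_le_of_lt (min_le_right _ _) (by linarith)
  set C := Real.tan (-(π/2) + ε') with hCdef
  refine ⟨max 1 ((2*(n:ℝ)+1)*π/2 * (-C) + 1), fun μ hμ => ?_⟩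
  have hμ1 : (1:ℝ) ≤ μ := le_trans (le_max_left _ _) hμ
  have hμ2 : (2*(n:ℝ)+1)*π/2 * (-C) + 1 ≤ μ := le_trans (le_max_right _ _) hμ
  have hμ0 : (0:ℝ) < μ := by linarith
  obtain ⟨⟨hlo, hhi⟩, heq⟩ := hκ μ hμ0
  have hkey : (2*(n:ℝ)-1)*π/2 = (n:ℝ)*π - π/2 := by ring
  have hkey2 : (2*(n:ℝ)+1)*π/2 = (n:ℝ)*π + π/2 := by ring
  have htany : Real.tan (κ μ) = Real.tan (κ μ - n * π) :=
    (Real.tan_periodic.sub_nat_mul_eq n).symm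
  set y := κ μ - n * π with hydef
  have hylo : -(π/2) < y := by
    have := hlo; rw [hkey] at this; simp only [hydef]; linarith
  have hyhi : y < π/2 := by
    have := hhi; rw [hkey2] at this; simp only [hydef]; linarith
  have hκpos : 0 < κ μ := by nlinarith
  have htneg : Real.tan y < 0 := by
    by_contra h
    push_neg at h
    rw [htany] at heq
    nlinarith [mul_nonneg (le_of_lt hκpos) h]
  -- main claim: y < -(π/2) + ε'
  have hmain : y < -(π/2) + ε' := by
    by_contra h
    push_neg at h
    have hmem1 : -(π/2) + ε' ∈ Set.Ioo (-(π/2)) (π/2) := ⟨by linarith, by linarith⟩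
    have hmem2 : y ∈ Set.Ioo (-(π/2)) (π/2) := ⟨hylo, hyhi⟩
    have hCle : C ≤ Real.tan y := by
      rcases eq_or_lt_of_le h with h' | h'
      · rw [← h']
      · exact le_of_lt (Real.strictMonoOn_tan hmem1 hmem2 h')
    have hp1 : (2*(n:ℝ)+1)*π/2 * Real.tan y ≤ κ μ * Real.tan y :=
      mul_le_mul_of_nonpos_right (le_of_lt hhi) (le_of_lt htneg)
    have hpos : (0:ℝ) < (2*(n:ℝ)+1)*π/2 := by nlinarith
    have hp2 : (2*(n:ℝ)+1)*π/2 * C ≤ (2*(n:ℝ)+1)*π/2 * Real.tan y :=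
      mul_le_mul_of_nonneg_left hCle (le_of_lt hpos)
    rw [htany] at heq
    have hre : (2*(n:ℝ)+1)*π/2 * (-C) = -((2*(n:ℝ)+1)*π/2 * C) := by ring
    rw [hre] at hμ2
    linarith
  rw [Real.dist_eq, abs_lt]
  constructor
  · rw [hkey]; simp only [hydef] at hylo; linarith
  · rw [hkey]; simp only [hydef] at hmain; linarith

theorem eps_tendsto_pi_half_mu_to_infty (n : ℕ) (hn : 1 ≤ n) (κ : ℝ → ℝ)
    (hκ : ∀ μ : ℝ, 0 < μ →
      κ μ ∈ Set.Ioo ((2 * (n : ℝ) - 1) * π / 2) ((2 * (n : ℝ) + 1) * π / 2) ∧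
      κ μ * Real.tan (κ μ) + μ = 0) :
    Tendsto (fun μ : ℝ => (n : ℝ) * π - κ μ) atTop (nhds (π / 2)) ∧
      Tendsto κ atTop (nhds ((2 * (n : ℝ) - 1) * π / 2)) := by
  have h2 := kappa_tendsto_aux n hn κ hκ
  refine ⟨?_, h2⟩
  have h1 := h2.const_sub ((n:ℝ)*π)
  have : (n:ℝ)*π - (2*(n:ℝ)-1)*π/2 = π/2 := by ring
  rwa [this] at h1
end

section
/- For each fixed μ > 0, the sequence ε_n(μ) = nπ - κ_n(μ) is strictly decreasing in n: ε_{n+1}(μ) < ε_n(μ) for all integers n ≥ 1. -/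
open Real

theorem eps_strict_decreasing_in_n (μ : ℝ) (hμ : 0 < μ) (κ : ℕ → ℝ)
    (hκ : ∀ n : ℕ, 1 ≤ n →
      κ n ∈ Set.Ioo ((2 * (n : ℝ) - 1) * π / 2) ((2 * (n : ℝ) + 1) * π / 2) ∧
      κ n * Real.tan (κ n) + μ = 0) :
    ∀ n : ℕ, 1 ≤ n → ((n : ℝ) + 1) * π - κ (n + 1) < (n : ℝ) * π - κ n := by
  have hπ := Real.pi_pos
  -- general facts about ε m := m*π - κ m
  have key : ∀ m : ℕ, 1 ≤ m →
      ((m : ℝ) * π - κ m) ∈ Set.Ioo (-(π/2)) (π/2) ∧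
      Real.tan ((m : ℝ) * π - κ m) = μ / κ m ∧ 0 < κ m := by
    intro m hm
    obtain ⟨⟨h1, h2⟩, heq⟩ := hκ m hm
    have hm1 : (1 : ℝ) ≤ (m : ℝ) := by exact_mod_cast hm
    have hκpos : 0 < κ m := by nlinarith
    have hmem : ((m : ℝ) * π - κ m) ∈ Set.Ioo (-(π/2)) (π/2) := by
      constructor <;> nlinarith
    have htan : Real.tan (κ m) = -Real.tan ((m : ℝ) * π - κ m) := by
      have := (Real.tan_periodic.nat_mul m) (-((m : ℝ) * π - κ m))
      have h' : -((m : ℝ) * π - κ m) + (m : ℝ) * π = κ m := by ring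
      rw [h'] at this
      rw [this, Real.tan_neg]
    have : κ m * Real.tan (κ m) = -μ := by linarith
    rw [htan] at this
    refine ⟨hmem, ?_, hκpos⟩
    field_simp
    nlinarith
  intro n hn
  obtain ⟨hmem, htan, hpos⟩ := key n hn
  obtain ⟨hmem', htan', hpos'⟩ := key (n + 1) (by omega)
  have hlt : κ n < κ (n + 1) := by
    obtain ⟨⟨_, h2⟩, _⟩ := hκ n hn
    obtain ⟨⟨h1', _⟩, _⟩ := hκ (n + 1) (by omega)
    push_cast at h1'
    nlinarith
  have htlt : Real.tan (((n : ℝ) + 1) * π - κ (n + 1)) < Real.tan ((n : ℝ) * π - κ n) := by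
    push_cast at htan'
    rw [htan', htan]
    exact div_lt_div_of_pos_left hμ hpos hlt
  have hmem'' : (((n : ℝ) + 1) * π - κ (n + 1)) ∈ Set.Ioo (-(π/2)) (π/2) := by
    push_cast at hmem' ⊢; convert hmem' using 2
  exact (Real.strictMonoOn_tan.lt_iff_lt hmem'' hmem).mp htlt
end

section
/- For each fixed integer n ≥ 1, ε_n(μ) = nπ - κ_n(μ) is strictly increasing as a function of μ on (0, ∞). -/
open Real

private lemma cos_ne_zero_of_mem (n : ℕ) (x : ℝ)
    (hx : x ∈ Set.Ioo ((2 * (n : ℝ) - 1) * π / 2) ((2 * (n : ℝ) + 1) * π / 2)) :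
    Real.cos x ≠ 0 := by
  rw [Real.cos_ne_zero_iff]
  intro k hk
  obtain ⟨h1, h2⟩ := hx
  rw [hk] at h1 h2
  have hπ : (0:ℝ) < π := Real.pi_pos
  have e1 : (2 * (n : ℝ) - 1) < 2 * (k : ℝ) + 1 := by
    have := (div_lt_div_iff_of_pos_right (by norm_num : (0:ℝ) < 2)).mp h1
    exact lt_of_mul_lt_mul_right this hπ.le
  have e2 : (2 * (k : ℝ) + 1) < 2 * (n : ℝ) + 1 := by
    have := (div_lt_div_iff_of_pos_right (by norm_num : (0:ℝ) < 2)).mp h2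
    exact lt_of_mul_lt_mul_right this hπ.le
  have hk1 : (n : ℤ) - 1 < k := by exact_mod_cast (by linarith : ((n : ℝ) - 1) < (k : ℝ))
  have hk2 : (k : ℤ) < n := by exact_mod_cast (by linarith : (k : ℝ) < (n : ℝ))
  omega

theorem eps_strict_increasing_in_mu (n : ℕ) (hn : 1 ≤ n) (κ : ℝ → ℝ)
    (hκ : ∀ μ : ℝ, 0 < μ →
      κ μ ∈ Set.Ioo ((2 * (n : ℝ) - 1) * π / 2) ((2 * (n : ℝ) + 1) * π / 2) ∧
      κ μ * Real.tan (κ μ) + μ = 0) :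
    StrictMonoOn (fun μ : ℝ => (n : ℝ) * π - κ μ) (Set.Ioi 0) := by
  set I : Set ℝ := Set.Ioo ((2 * (n : ℝ) - 1) * π / 2) ((2 * (n : ℝ) + 1) * π / 2) with hI
  have hπ : (0:ℝ) < π := Real.pi_pos
  have hn1 : (1:ℝ) ≤ (n : ℝ) := by exact_mod_cast hn
  have hone : ∀ x ∈ I, (1:ℝ) ≤ x := by
    intro x hx
    have h1 : π / 2 ≤ (2 * (n : ℝ) - 1) * π / 2 := by nlinarith [Real.pi_gt_three]
    have := hx.1
    nlinarith [Real.pi_gt_three]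
  -- g(x) = x * tan x is strictly monotone on I
  have hmono : StrictMonoOn (fun x => x * Real.tan x) I := by
    apply strictMonoOn_of_deriv_pos (convex_Ioo _ _)
    · intro x hx
      exact (continuousAt_id.mul (Real.continuousAt_tan.mpr
        (cos_ne_zero_of_mem n x hx))).continuousWithinAt
    · intro x hx
      rw [interior_Ioo] at hx
      have hc : Real.cos x ≠ 0 := cos_ne_zero_of_mem n x hx
      have hd : HasDerivAt (fun x => x * Real.tan x)
          (1 * Real.tan x + x * (1 / Real.cos x ^ 2)) x :=
        (hasDerivAt_id x).mul (Real.hasDerivAt_tan hc)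
      rw [hd.deriv]
      have ht : Real.tan x ^ 2 + 1 = 1 / Real.cos x ^ 2 := by
        rw [Real.tan_eq_sin_div_cos]
        field_simp
        exact Real.sin_sq_add_cos_sq x
      have hx1 : (1:ℝ) ≤ x := hone x hx
      nlinarith [sq_nonneg (Real.tan x), sq_nonneg (Real.tan x + 1)]
  intro μ₁ h₁ μ₂ h₂ hlt
  simp only [Set.mem_Ioi] at h₁ h₂
  obtain ⟨ha, ea⟩ := hκ μ₁ h₁
  obtain ⟨hb, eb⟩ := hκ μ₂ h₂
  have key : κ μ₂ < κ μ₁ := by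
    rw [← hmono.lt_iff_lt hb ha]
    show κ μ₂ * Real.tan (κ μ₂) < κ μ₁ * Real.tan (κ μ₁)
    linarith
  show (n:ℝ) * π - κ μ₁ < (n:ℝ) * π - κ μ₂
  linarith
end

section
/- The map φ(ε) = Arctan(μ/(nπ - ε)) maps the interval (0, π/2) into itself (for n ≥ 1 and μ > 0), and its unique fixed point in (0, π/2) is ε_n(μ) = nπ - κ_n(μ). -/
open Real

private lemma my_arctan_nonneg {x : ℝ} (hx : 0 ≤ x) : 0 ≤ Real.arctan x := by
  rw [← Real.arctan_zero]; exact Real.arctan_strictMono.monotone hx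

private lemma my_arctan_le_self {x : ℝ} (hx : 0 ≤ x) : Real.arctan x ≤ x := by
  calc Real.arctan x ≤ Real.tan (Real.arctan x) :=
        Real.le_tan (my_arctan_nonneg hx) (Real.arctan_lt_pi_div_two x)
    _ = x := Real.tan_arctan x

private lemma my_arctan_diff_le {a b : ℝ} (ha : 0 ≤ a) (hab : a ≤ b) :
    Real.arctan b - Real.arctan a ≤ (b - a) / (1 + a * b) := by
  have hb : 0 ≤ b := le_trans ha hab
  have h : b * (-a) < 1 := by nlinarith
  have hadd := Real.arctan_add (x := b) (y := -a) h
  rw [Real.arctan_neg] at hadd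
  have hd : (1 : ℝ) - b * -a = 1 + a * b := by ring
  have h0 : 0 ≤ (b + -a) / (1 - b * -a) := by
    apply div_nonneg (by linarith)
    rw [hd]; nlinarith
  calc Real.arctan b - Real.arctan a
      = Real.arctan b + -Real.arctan a := by ring
    _ = Real.arctan ((b + -a) / (1 - b * -a)) := hadd
    _ ≤ (b + -a) / (1 - b * -a) := my_arctan_le_self h0
    _ = (b - a) / (1 + a * b) := by rw [hd]; ring_nf

private lemma my_contra_aux {μ D₁ D₂ e : ℝ} (hμ : 0 < μ) (he : 0 < e)
    (hD₂ : 3/2 < D₂) (hD₁ : D₂ < D₁) (hdiff : D₁ - D₂ = e)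
    (hle : e ≤ (μ / D₂ - μ / D₁) / (1 + (μ / D₁) * (μ / D₂))) : False := by
  have hD₂p : 0 < D₂ := by linarith
  have hD₁p : 0 < D₁ := by linarith
  have key : (μ / D₂ - μ / D₁) / (1 + (μ / D₁) * (μ / D₂))
      = μ * e / (D₁ * D₂ + μ * μ) := by
    rw [← hdiff]
    field_simp
  rw [key] at hle
  have hpos2 : 0 < D₁ * D₂ + μ * μ := by positivity
  have h1 : e * (D₁ * D₂ + μ * μ) ≤ μ * e := (le_div_iff₀ hpos2).mp hle
  have hDD : 9/4 < D₁ * D₂ := by nlinarith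
  nlinarith [h1, mul_lt_mul_of_pos_left hDD he,
    mul_le_mul_of_nonneg_left (sq_nonneg (μ - 1/2)) he.le]

theorem picard_map_fixed_point (n : ℕ) (hn : 1 ≤ n) (μ : ℝ) (hμ : 0 < μ) (κ : ℝ)
    (hκmem : κ ∈ Set.Ioo ((2 * (n : ℝ) - 1) * π / 2) ((2 * (n : ℝ) + 1) * π / 2))
    (hκroot : κ * Real.tan κ + μ = 0) :
    (∀ ε ∈ Set.Ioo 0 (π / 2),
        Real.arctan (μ / ((n : ℝ) * π - ε)) ∈ Set.Ioo 0 (π / 2)) ∧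
      (∀ ε ∈ Set.Ioo 0 (π / 2),
        Real.arctan (μ / ((n : ℝ) * π - ε)) = ε ↔ ε = (n : ℝ) * π - κ) := by
  obtain ⟨hκ1, hκ2⟩ := hκmem
  have hπ := Real.pi_pos
  have hπ3 := Real.pi_gt_three
  have hn1 : (1:ℝ) ≤ (n:ℝ) := by exact_mod_cast hn
  have hnπ : π ≤ (n:ℝ) * π := by nlinarith
  -- Part 1
  have hmap : ∀ ε ∈ Set.Ioo (0:ℝ) (π/2),
      Real.arctan (μ / ((n : ℝ) * π - ε)) ∈ Set.Ioo (0:ℝ) (π / 2) := by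
    intro ε hε
    obtain ⟨hε1, hε2⟩ := hε
    have hden : 0 < (n:ℝ) * π - ε := by linarith
    refine ⟨?_, Real.arctan_lt_pi_div_two _⟩
    rw [← Real.arctan_zero]
    exact Real.arctan_strictMono (div_pos hμ hden)
  refine ⟨hmap, ?_⟩
  -- κ facts
  have hκpos : 0 < κ := by nlinarith
  have hκne : κ ≠ 0 := hκpos.ne'
  have htanκ : Real.tan κ = -μ / κ := by
    field_simp
    linarith
  have htanκneg : Real.tan κ < 0 := by
    rw [htanκ]; exact div_neg_of_neg_of_pos (by linarith) hκpos
  have hκtan : Real.tan (κ - (n:ℝ) * π) = Real.tan κ := by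
    have := Real.tan_periodic.sub_nat_mul_eq (x := κ) n
    simpa using this
  have hκlt : κ < (n:ℝ) * π := by
    by_contra h
    push_neg at h
    have h1 : 0 ≤ κ - (n:ℝ) * π := by linarith
    have h2 : κ - (n:ℝ) * π ≤ π / 2 := by nlinarith
    have := Real.tan_nonneg_of_nonneg_of_le_pi_div_two h1 h2
    rw [hκtan] at this
    linarith
  have hκgt : (n:ℝ) * π - π / 2 < κ := by nlinarith
  -- ε₀ := nπ - κ is a fixed point
  have hfix : Real.arctan (μ / ((n:ℝ) * π - ((n:ℝ) * π - κ))) = (n:ℝ) * π - κ := by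
    have h1 : (n:ℝ) * π - ((n:ℝ) * π - κ) = κ := by ring
    rw [h1]
    have h2 : Real.tan ((n:ℝ) * π - κ) = μ / κ := by
      have h3 : (n:ℝ) * π - κ = -(κ - (n:ℝ) * π) := by ring
      rw [h3, Real.tan_neg, hκtan, htanκ]
      field_simp
    rw [← h2, Real.arctan_tan (by linarith) (by linarith)]
  -- uniqueness of fixed points
  have huniq : ∀ ε₁ ∈ Set.Ioo (0:ℝ) (π/2), ∀ ε₂ ∈ Set.Ioo (0:ℝ) (π/2),
      Real.arctan (μ / ((n : ℝ) * π - ε₁)) = ε₁ →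
      Real.arctan (μ / ((n : ℝ) * π - ε₂)) = ε₂ → ε₁ ≤ ε₂ → ε₁ = ε₂ := by
    intro ε₁ hε₁ ε₂ hε₂ hf₁ hf₂ hle
    obtain ⟨hε₁1, hε₁2⟩ := hε₁
    obtain ⟨hε₂1, hε₂2⟩ := hε₂
    by_contra hne
    have hlt : ε₁ < ε₂ := lt_of_le_of_ne hle hne
    have he : 0 < ε₂ - ε₁ := sub_pos.mpr hlt
    have hD₂pos : 0 < (n:ℝ) * π - ε₂ := by linarith
    have hD₁pos : 0 < (n:ℝ) * π - ε₁ := by linarith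
    have ha12 : μ / ((n:ℝ) * π - ε₁) ≤ μ / ((n:ℝ) * π - ε₂) :=
      div_le_div_of_nonneg_left hμ.le hD₂pos (by linarith)
    have ha₁pos : 0 ≤ μ / ((n:ℝ) * π - ε₁) := (div_pos hμ hD₁pos).le
    have hdiff := my_arctan_diff_le ha₁pos ha12
    rw [hf₁, hf₂] at hdiff
    refine my_contra_aux (μ := μ) (D₁ := (n:ℝ) * π - ε₁) (D₂ := (n:ℝ) * π - ε₂)
      (e := ε₂ - ε₁) hμ he (by linarith) (by linarith) (by ring) ?_
    calc ε₂ - ε₁ ≤ (μ / ((n:ℝ) * π - ε₂) - μ / ((n:ℝ) * π - ε₁)) /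
          (1 + (μ / ((n:ℝ) * π - ε₁)) * (μ / ((n:ℝ) * π - ε₂))) := hdiff
      _ = _ := by ring_nf
  -- conclude
  intro ε hε
  constructor
  · intro hfε
    have hε₀mem : ((n:ℝ) * π - κ) ∈ Set.Ioo (0:ℝ) (π/2) := ⟨by linarith, by linarith⟩
    rcases le_total ε ((n:ℝ) * π - κ) with h | h
    · exact huniq ε hε _ hε₀mem hfε hfix h
    · exact (huniq _ hε₀mem ε hε hfix hfε h).symm
  · intro h
    rw [h]
    exact hfix
end

section
/- For the compound second-order iteration applied to find κ_n, the asymptotic error estimate |x_{j+1} - κ_n| ≤ δ_n(μ)² r_n(μ) |x_j - κ_n|² + O(|x_j - κ_n|³) holds, where r_n(μ) is the error constant of the underlying Newton–Raphson iteration for f(ε; μ) = nπ - ε - μ cot(ε) and δ_n(μ) = 4μ/((2n-1)²π² + 4μ²). -/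
open Real

theorem compound_second_order_error (n : ℕ) (hn : 1 ≤ n) (μ : ℝ) (hμ : 0 < μ) (κ : ℝ)
    (hκmem : κ ∈ Set.Ioo ((2 * (n : ℝ) - 1) * π / 2) ((2 * (n : ℝ) + 1) * π / 2))
    (hκroot : κ * Real.tan κ + μ = 0)
    (N : ℝ → ℝ)
    (hN : N = fun ε : ℝ =>
      ε - ((n : ℝ) * π - ε - μ * Real.cot ε) /
        deriv (fun ε' : ℝ => (n : ℝ) * π - ε' - μ * Real.cot ε') ε)
    (r : ℝ) (hr : 0 < r)
    (hNewton : ∃ C' > (0 : ℝ), ∃ ρ' > (0 : ℝ), ∀ ε : ℝ,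
      |ε - ((n : ℝ) * π - κ)| < ρ' →
      |N ε - ((n : ℝ) * π - κ)| ≤ r * |ε - ((n : ℝ) * π - κ)| ^ 2 +
        C' * |ε - ((n : ℝ) * π - κ)| ^ 3) :
    ∃ C > (0 : ℝ), ∃ ρ > (0 : ℝ), ∀ x : ℝ, |x - κ| < ρ →
      |((n : ℝ) * π - N (Real.arctan (μ / x))) - κ| ≤
        (4 * μ / ((2 * (n : ℝ) - 1) ^ 2 * π ^ 2 + 4 * μ ^ 2)) ^ 2 * r * |x - κ| ^ 2 +
          C * |x - κ| ^ 3 := by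
  obtain ⟨C', hC', ρ', hρ', hNR⟩ := hNewton
  set a : ℝ := (2 * (n : ℝ) - 1) * π / 2 with ha_def
  have hn1 : (1 : ℝ) ≤ (n : ℝ) := by exact_mod_cast hn
  have ha : 0 < a := by
    have : (0 : ℝ) < 2 * (n : ℝ) - 1 := by linarith
    have := Real.pi_pos
    positivity
  have haκ : a < κ := hκmem.1
  have hκ0 : 0 < κ := lt_trans ha haκ
  set δ : ℝ := μ / (a ^ 2 + μ ^ 2) with hδ_def
  have hδpos : 0 < δ := by positivity
  have hδeq : δ = 4 * μ / ((2 * (n : ℝ) - 1) ^ 2 * π ^ 2 + 4 * μ ^ 2) := by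
    rw [hδ_def, ha_def]
    have h1 : ((2 * (n : ℝ) - 1) * π / 2) ^ 2 + μ ^ 2
        = ((2 * (n : ℝ) - 1) ^ 2 * π ^ 2 + 4 * μ ^ 2) / 4 := by ring
    rw [h1]
    rw [div_div_eq_mul_div]
    ring
  have hδ1 : δ ≤ 1 := by
    have hAM : 2 * a * μ ≤ a ^ 2 + μ ^ 2 := two_mul_le_add_sq a μ
    have hpi : (1 : ℝ) ≤ 2 * a := by
      have hπ : (3 : ℝ) ≤ π := by linarith [Real.pi_gt_three]
      have : π / 2 ≤ a := by
        rw [ha_def]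
        have : (1 : ℝ) ≤ 2 * (n : ℝ) - 1 := by linarith
        nlinarith [Real.pi_pos]
      linarith [Real.pi_pos]
    rw [hδ_def, div_le_one (by positivity)]
    nlinarith
  -- arctan (μ / κ) = n π - κ
  have hεstar : Real.arctan (μ / κ) = (n : ℝ) * π - κ := by
    have hmem : (n : ℝ) * π - κ ∈ Set.Ioo (-(π / 2)) (π / 2) := by
      constructor
      · have := hκmem.2; nlinarith [Real.pi_pos]
      · have := hκmem.1; nlinarith [Real.pi_pos]
    have htan : Real.tan ((n : ℝ) * π - κ) = μ / κ := by
      have h1 : Real.tan ((n : ℝ) * π - κ) = Real.tan (-κ) := by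
        have := Real.tan_periodic.nat_mul n
        have h2 : (n : ℝ) * π - κ = -κ + (n : ℝ) * π := by ring
        rw [h2, (Real.tan_periodic.nat_mul n) (-κ)]
      rw [h1, Real.tan_neg]
      have hκt : Real.tan κ = -μ / κ := by
        field_simp
        linarith [hκroot]
      rw [hκt]
      field_simp
    rw [← htan, Real.arctan_tan hmem.1 hmem.2]
  -- Lipschitz bound for the Picard map on (a, ∞)
  have hlip : ∀ x ∈ Set.Ioi a, ∀ y ∈ Set.Ioi a,
      |Real.arctan (μ / x) - Real.arctan (μ / y)| ≤ δ * |x - y| := by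
    intro x hx y hy
    have hderiv : ∀ z ∈ Set.Ioi a,
        HasDerivWithinAt (fun t => Real.arctan (μ / t))
          (1 / (1 + (μ / z) ^ 2) * (μ * -(z ^ 2)⁻¹)) (Set.Ioi a) z := by
      intro z hz
      have hz0 : z ≠ 0 := (lt_trans ha hz).ne'
      have h1 : HasDerivAt (fun t : ℝ => μ / t) (μ * -(z ^ 2)⁻¹) z := by
        simpa [div_eq_mul_inv] using (hasDerivAt_inv hz0).const_mul μ
      exact ((Real.hasDerivAt_arctan (μ / z)).comp z h1).hasDerivWithinAt
    have hbound : ∀ z ∈ Set.Ioi a,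
        ‖1 / (1 + (μ / z) ^ 2) * (μ * -(z ^ 2)⁻¹)‖ ≤ δ := by
      intro z hz
      have hza : a < z := hz
      have hz0 : 0 < z := lt_trans ha hza
      have heq : 1 / (1 + (μ / z) ^ 2) * (μ * -(z ^ 2)⁻¹) = -(μ / (z ^ 2 + μ ^ 2)) := by
        have hz2 : z ^ 2 ≠ 0 := by positivity
        field_simp
      rw [heq, norm_neg, Real.norm_eq_abs, abs_of_nonneg (by positivity)]
      rw [hδ_def]
      gcongr
    exact (convex_Ioi a).norm_image_sub_le_of_norm_hasDerivWithin_le hderiv hbound hy hx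
  refine ⟨C', hC', min ρ' (κ - a), lt_min hρ' (by linarith), ?_⟩
  intro x hx
  have hxρ' : |x - κ| < ρ' := lt_of_lt_of_le hx (min_le_left _ _)
  have hxa : x ∈ Set.Ioi a := by
    have h1 : |x - κ| < κ - a := lt_of_lt_of_le hx (min_le_right _ _)
    have := abs_lt.mp h1
    simp only [Set.mem_Ioi]
    linarith [this.1]
  have hκa : κ ∈ Set.Ioi a := haκ
  have hpic : |Real.arctan (μ / x) - ((n : ℝ) * π - κ)| ≤ δ * |x - κ| := by
    rw [← hεstar]
    exact hlip x hxa κ hκa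
  have hpicρ' : |Real.arctan (μ / x) - ((n : ℝ) * π - κ)| < ρ' := by
    calc |Real.arctan (μ / x) - ((n : ℝ) * π - κ)| ≤ δ * |x - κ| := hpic
      _ ≤ 1 * |x - κ| := by gcongr
      _ = |x - κ| := one_mul _
      _ < ρ' := hxρ'
  have hmain := hNR (Real.arctan (μ / x)) hpicρ'
  have habs : |((n : ℝ) * π - N (Real.arctan (μ / x))) - κ|
      = |N (Real.arctan (μ / x)) - ((n : ℝ) * π - κ)| := by
    rw [abs_sub_comm]
    congr 1
    ring
  rw [habs, ← hδeq]
  have he := abs_nonneg (Real.arctan (μ / x) - ((n : ℝ) * π - κ))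
  have hxk := abs_nonneg (x - κ)
  calc |N (Real.arctan (μ / x)) - ((n : ℝ) * π - κ)|
      ≤ r * |Real.arctan (μ / x) - ((n : ℝ) * π - κ)| ^ 2 +
        C' * |Real.arctan (μ / x) - ((n : ℝ) * π - κ)| ^ 3 := hmain
    _ ≤ r * (δ * |x - κ|) ^ 2 + C' * (δ * |x - κ|) ^ 3 := by gcongr
    _ = δ ^ 2 * r * |x - κ| ^ 2 + C' * δ ^ 3 * |x - κ| ^ 3 := by ring
    _ ≤ δ ^ 2 * r * |x - κ| ^ 2 + C' * 1 * |x - κ| ^ 3 := by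
        gcongr
        calc δ ^ 3 ≤ 1 ^ 3 := by gcongr
          _ = 1 := one_pow 3
    _ = δ ^ 2 * r * |x - κ| ^ 2 + C' * |x - κ| ^ 3 := by ring
end

section
/- The explicit approximation error of A_n(μ) = nπ - Arctan(μ/(nπ)) satisfies: A_n(μ) lies in the interval (κ_n(μ), nπ), i.e. it overestimates the true root κ_n(μ), for every μ > 0 and every integer n ≥ 1. -/
open Real

theorem An_overestimates_root (n : ℕ) (hn : 1 ≤ n) (μ : ℝ) (hμ : 0 < μ) (κ : ℝ)
    (hκmem : κ ∈ Set.Ioo ((2 * (n : ℝ) - 1) * π / 2) ((2 * (n : ℝ) + 1) * π / 2))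
    (hκroot : κ * Real.tan κ + μ = 0) :
    (n : ℝ) * π - Real.arctan (μ / ((n : ℝ) * π)) ∈ Set.Ioo κ ((n : ℝ) * π) := by
  obtain ⟨h1, h2⟩ := hκmem
  have hn' : (1:ℝ) ≤ n := by exact_mod_cast hn
  have hπ := Real.pi_pos
  have hκpos : 0 < κ := lt_trans (by nlinarith) h1
  have hεlt : (n:ℝ)*π - κ < π/2 := by nlinarith
  have hεgt : -(π/2) < (n:ℝ)*π - κ := by nlinarith
  have htanκ : Real.tan κ = -(μ/κ) := by
    field_simp
    linarith [hκroot]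
  have htan : Real.tan ((n:ℝ)*π - κ) = μ / κ := by
    have h3 : Real.tan (-κ + n*π) = Real.tan (-κ) := (Real.tan_periodic.nat_mul n) (-κ)
    rw [show (n:ℝ)*π - κ = -κ + (n:ℝ)*π by ring, h3, Real.tan_neg, htanκ, neg_neg]
  have hε : (n:ℝ)*π - κ = Real.arctan (μ/κ) := by
    rw [← htan, Real.arctan_tan hεgt hεlt]
  have hεpos : 0 < (n:ℝ)*π - κ := by
    rw [hε]; exact by simpa using Real.arctan_strictMono (div_pos hμ hκpos)
  have hκlt : κ < (n:ℝ)*π := by linarith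
  have hmono : Real.arctan (μ/((n:ℝ)*π)) < Real.arctan (μ/κ) :=
    Real.arctan_strictMono (div_lt_div_of_pos_left hμ hκpos hκlt)
  constructor
  · linarith [hε ▸ hmono]
  · have : 0 < Real.arctan (μ/((n:ℝ)*π)) :=
      by simpa using Real.arctan_strictMono (div_pos hμ (show (0:ℝ) < (n:ℝ)*π by positivity))
    linarith
end
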